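/- Let k be a commutative noetherian ring, A a k-algebra which is flat as a k-module, M a left A-module, (F_i)_{i∈I} a family of rank one free right A-modules, and D a free A ⊗_k Aᵒᵖ-module. Then the canonical morphism D ⊗_{A ⊗_k Aᵒᵖ} (M ⊗_k ∏_{i∈I} F_i) → ∏_{i∈I} (D ⊗_{A ⊗_k Aᵒᵖ} (M ⊗_k F_i)) is injective. -/

import Mathlib

open TensorProduct MulOpposite CategoryTheory

universe u v w x

set_option linter.unusedSectionVars false
set_option linter.unusedVariables false

noncomputable section

section BimoduleTensor
variable (k : Type u) (A : Type v) [CommRing k] [Ring A] [Algebra k A]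
variable (M : Type w) [AddCommGroup M] [Module k M] [Module A M] [IsScalarTower k A M]
variable (N : Type w') [AddCommGroup N] [Module k N] [Module Aᵐᵒᵖ N] [IsScalarTower k Aᵐᵒᵖ N]

/-- Right `A`-action on `M ⊗[k] N` through the second factor. -/
def rightEnd : Aᵐᵒᵖ →+* Module.End k (M ⊗[k] N) where
  toFun a := LinearMap.lTensor M ((Algebra.lsmul k k N) a)
  map_one' := by (try dsimp only); rw [map_one]; exact LinearMap.lTensor_id M N
  map_mul' a b := by (try dsimp only); rw [map_mul]; exact LinearMap.lTensor_comp M _ _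
  map_zero' := by (try dsimp only); rw [map_zero]; exact LinearMap.lTensor_zero M
  map_add' a b := by (try dsimp only); rw [map_add]; exact LinearMap.lTensor_add M _ _

/-- `M ⊗[k] N` as a module over `Aᵐᵒᵖ` (through the second factor). -/
def tensorRightModule : Module Aᵐᵒᵖ (M ⊗[k] N) := Module.compHom _ (rightEnd k A M N)

theorem tensorRightModule_smul_tmul (a : Aᵐᵒᵖ) (m : M) (n : N) :
    letI := tensorRightModule k A M N
    a • (m ⊗ₜ[k] n) = m ⊗ₜ[k] (a • n) := rfl

theorem tensorRightModule_isScalarTower :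
    letI := tensorRightModule k A M N
    IsScalarTower k Aᵐᵒᵖ (M ⊗[k] N) := by
  letI := tensorRightModule k A M N
  constructor
  intro c a x
  induction x using TensorProduct.induction_on with
  | zero => simp only [smul_zero]
  | tmul m n =>
      rw [tensorRightModule_smul_tmul, tensorRightModule_smul_tmul, smul_assoc, tmul_smul]
  | add x y hx hy => rw [smul_add, smul_add, smul_add, hx, hy]

theorem tensorRightModule_smulCommClass :
    letI := tensorRightModule k A M N
    SMulCommClass A Aᵐᵒᵖ (M ⊗[k] N) := by
  letI := tensorRightModule k A M N
  constructor
  intro a b x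
  induction x using TensorProduct.induction_on with
  | zero => simp only [smul_zero]
  | tmul m n =>
      rw [tensorRightModule_smul_tmul, smul_tmul', smul_tmul', tensorRightModule_smul_tmul]
  | add x y hx hy => rw [smul_add, smul_add, smul_add, smul_add, hx, hy]

/-- The `k`-central `A`-bimodule structure on `M ⊗[k] N`, as a module over the enveloping
algebra `A ⊗[k] Aᵐᵒᵖ`: here `A` acts on the left factor and `Aᵐᵒᵖ` on the right factor. -/
def bimoduleTensorModule : Module (A ⊗[k] Aᵐᵒᵖ) (M ⊗[k] N) :=
  letI := tensorRightModule k A M N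
  haveI := tensorRightModule_isScalarTower k A M N
  haveI := tensorRightModule_smulCommClass k A M N
  TensorProduct.Algebra.module

theorem bimoduleTensorModule_smul_tmul (a b : A) (m : M) (n : N) :
    letI := bimoduleTensorModule k A M N
    (a ⊗ₜ[k] (op b)) • (m ⊗ₜ[k] n) = (a • m) ⊗ₜ[k] ((op b) • n) := by
  letI := tensorRightModule k A M N
  letI := bimoduleTensorModule k A M N
  show (a • ((op b) • (m ⊗ₜ[k] n))) = (a • m) ⊗ₜ[k] ((op b) • n)
  rw [tensorRightModule_smul_tmul, smul_tmul']
end BimoduleTensor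

section BalTensor
variable (A : Type u) [Ring A]
variable (N : Type v) [AddCommGroup N] [Module Aᵐᵒᵖ N]
variable (M : Type w) [AddCommGroup M] [Module A M]

/-- The relations defining the balanced tensor product `N ⊗_A M` of a right `A`-module `N`
and a left `A`-module `M`. -/
def balRels : Submodule ℤ (N ⊗[ℤ] M) :=
  Submodule.span ℤ
    {x | ∃ (a : A) (n : N) (m : M), x = ((op a) • n) ⊗ₜ[ℤ] m - n ⊗ₜ[ℤ] (a • m)}

/-- The balanced tensor product `N ⊗_A M` of a right `A`-module `N` and a left `A`-module `M`,
defined as the quotient of `N ⊗[ℤ] M` by the submodule of balancing relations. -/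
abbrev BalTensor := (N ⊗[ℤ] M) ⧸ balRels A N M

variable {M}

/-- The functorial map `N ⊗_A M → N ⊗_A M'` induced by an `A`-linear map `M → M'`. -/
def balMap {M' : Type x} [AddCommGroup M'] [Module A M'] (f : M →ₗ[A] M') :
    BalTensor A N M →ₗ[ℤ] BalTensor A N M' :=
  Submodule.mapQ (balRels A N M) (balRels A N M')
    (LinearMap.lTensor N f.toAddMonoidHom.toIntLinearMap)
    (by
      rw [balRels, Submodule.span_le]
      rintro x ⟨a, n, m, rfl⟩
      show LinearMap.lTensor N f.toAddMonoidHom.toIntLinearMap _ ∈ balRels A N M'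
      rw [map_sub, LinearMap.lTensor_tmul, LinearMap.lTensor_tmul]
      have hsm : f.toAddMonoidHom.toIntLinearMap (a • m) = a • (f.toAddMonoidHom.toIntLinearMap m) := by
        simp [LinearMap.map_smul]
      rw [hsm]
      exact Submodule.subset_span ⟨a, n, f.toAddMonoidHom.toIntLinearMap m, rfl⟩)

variable {N} (M)

/-- The functorial map `N ⊗_A M → N' ⊗_A M` induced by a map `N → N'` of right `A`-modules. -/
def balMapLeft {N' : Type x} [AddCommGroup N'] [Module Aᵐᵒᵖ N'] (g : N →ₗ[Aᵐᵒᵖ] N') :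
    BalTensor A N M →ₗ[ℤ] BalTensor A N' M :=
  Submodule.mapQ (balRels A N M) (balRels A N' M)
    (LinearMap.rTensor M g.toAddMonoidHom.toIntLinearMap)
    (by
      rw [balRels, Submodule.span_le]
      rintro x ⟨a, n, m, rfl⟩
      show LinearMap.rTensor M g.toAddMonoidHom.toIntLinearMap _ ∈ balRels A N' M
      rw [map_sub, LinearMap.rTensor_tmul, LinearMap.rTensor_tmul]
      have hsm : g.toAddMonoidHom.toIntLinearMap ((op a) • n)
          = (op a) • (g.toAddMonoidHom.toIntLinearMap n) := by
        simp [LinearMap.map_smul]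
      rw [hsm]
      exact Submodule.subset_span ⟨a, g.toAddMonoidHom.toIntLinearMap n, m, rfl⟩)

variable (N)

/-- A right `A`-module `N` is *flat* if the functor `N ⊗_A (−)` is exact on left `A`-modules. -/
def RightFlat : Prop :=
  ∀ (M₁ M₂ M₃ : Type u) [AddCommGroup M₁] [Module A M₁] [AddCommGroup M₂] [Module A M₂]
    [AddCommGroup M₃] [Module A M₃] (f : M₁ →ₗ[A] M₂) (g : M₂ →ₗ[A] M₃),
    Function.Exact f g → Function.Exact (balMap A N f) (balMap A N g)

/-- The canonical comparison map `(∏ᵢ Fᵢ) ⊗_A M → ∏ᵢ (Fᵢ ⊗_A M)` induced by the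
projections `∏ᵢ Fᵢ → Fᵢ`. -/
def balPiCompare {I : Type x} (F : I → Type v) [∀ i, AddCommGroup (F i)]
    [∀ i, Module Aᵐᵒᵖ (F i)] :
    BalTensor A (∀ i, F i) M →ₗ[ℤ] ∀ i, BalTensor A (F i) M :=
  LinearMap.pi fun i => balMapLeft A M (LinearMap.proj i : (∀ j, F j) →ₗ[Aᵐᵒᵖ] F i)

end BalTensor

section BimodProj
variable (k : Type u) (A : Type u) [CommRing k] [Ring A] [Algebra k A]
variable (M : Type u) [AddCommGroup M] [Module k M] [Module A M] [IsScalarTower k A M]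
variable {I : Type u} (F : I → Type u) [∀ i, AddCommGroup (F i)] [∀ i, Module k (F i)]
  [∀ i, Module Aᵐᵒᵖ (F i)] [∀ i, IsScalarTower k Aᵐᵒᵖ (F i)]

/-- The map `M ⊗[k] (∏ⱼ Fⱼ) → M ⊗[k] Fᵢ` induced by the `i`-th projection, as a morphism of
modules over the enveloping algebra `A ⊗[k] Aᵐᵒᵖ`. -/
def bimodPiProj (i : I) :
    letI := bimoduleTensorModule k A M (∀ j, F j)
    letI := bimoduleTensorModule k A M (F i)
    (M ⊗[k] (∀ j, F j)) →ₗ[A ⊗[k] Aᵐᵒᵖ] (M ⊗[k] F i) :=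
  letI := bimoduleTensorModule k A M (∀ j, F j)
  letI := bimoduleTensorModule k A M (F i)
  { toFun := LinearMap.lTensor M (LinearMap.proj i : (∀ j, F j) →ₗ[k] F i)
    map_add' := map_add _
    map_smul' := by
      intro e x
      dsimp only [RingHom.id_apply]
      induction e using TensorProduct.induction_on with
      | zero => exact (congrArg _ (zero_smul (A ⊗[k] Aᵐᵒᵖ) x)).trans ((map_zero (LinearMap.lTensor M (LinearMap.proj i : (∀ j, F j) →ₗ[k] F i))).trans (zero_smul (A ⊗[k] Aᵐᵒᵖ) (LinearMap.lTensor M (LinearMap.proj i : (∀ j, F j) →ₗ[k] F i) x)).symm)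
      | tmul a b =>
          induction b using MulOpposite.rec' with
          | _ b =>
            induction x using TensorProduct.induction_on with
            | zero => simp only [smul_zero, map_zero]
            | tmul m g => rfl
            | add x y hx hy => rw [smul_add, map_add, hx, hy, map_add, smul_add]
      | add e f he hf => rw [add_smul, map_add, he, hf, add_smul] }
end BimodProj

section AuxPi

set_option maxHeartbeats 1000000
set_option synthInstance.maxHeartbeats 400000

open LinearMap

variable (k : Type*) [CommRing k]
variable {I : Type*} (F : I → Type*) [∀ i, AddCommGroup (F i)] [∀ i, Module k (F i)]

/-- `(Fin n → k) ⊗[k] Y ≃ (Fin n → Y)`. -/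
noncomputable def finFreeEquiv (n : ℕ) (Y : Type*) [AddCommGroup Y] [Module k Y] :
    ((Fin n → k) ⊗[k] Y) ≃ₗ[k] (Fin n → Y) :=
  (TensorProduct.comm k _ Y) ≪≫ₗ (TensorProduct.piRight k k Y (fun _ : Fin n => k)) ≪≫ₗ
    (LinearEquiv.piCongrRight fun _ => TensorProduct.rid k Y)

@[simp] lemma finFreeEquiv_tmul (n : ℕ) (Y : Type*) [AddCommGroup Y] [Module k Y]
    (c : Fin n → k) (y : Y) (t : Fin n) : finFreeEquiv k n Y (c ⊗ₜ[k] y) t = c t • y := by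
  simp [finFreeEquiv]

lemma piRightHom_naturality {N N' : Type*} [AddCommGroup N] [Module k N] [AddCommGroup N']
    [Module k N'] (g : N →ₗ[k] N') (x : N ⊗[k] (∀ i, F i)) (i : I) :
    TensorProduct.piRightHom k k N' F (rTensor _ g x) i
      = rTensor (F i) g (TensorProduct.piRightHom k k N F x i) := by
  induction x using TensorProduct.induction_on with
  | zero => simp
  | tmul n f => simp
  | add x y hx hy => simp only [map_add, Pi.add_apply, hx, hy]

lemma finFree_compat (n : ℕ) (x : (Fin n → k) ⊗[k] (∀ i, F i)) (t : Fin n) (i : I) :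
    finFreeEquiv k n _ x t i
      = finFreeEquiv k n (F i) (TensorProduct.piRightHom k k _ F x i) t := by
  induction x using TensorProduct.induction_on with
  | zero => simp
  | tmul c f => simp
  | add x y hx hy => simp only [map_add, Pi.add_apply, hx, hy]

lemma piRightHom_injective_finFree (n : ℕ) :
    Function.Injective (TensorProduct.piRightHom k k (Fin n → k) F) := by
  intro x y hxy
  apply (finFreeEquiv k n (∀ i, F i)).injective
  funext t i
  rw [finFree_compat, finFree_compat, hxy]

lemma piRightHom_surjective_finFree (n : ℕ) :
    Function.Surjective (TensorProduct.piRightHom k k (Fin n → k) F) := by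
  intro u
  refine ⟨(finFreeEquiv k n (∀ i, F i)).symm fun t i => finFreeEquiv k n (F i) (u i) t, ?_⟩
  funext i
  apply (finFreeEquiv k n (F i)).injective
  funext t
  rw [← finFree_compat]
  simp

lemma piRightHom_surjective_of_fin (N : Type*) [AddCommGroup N] [Module k N]
    [Module.Finite k N] : Function.Surjective (TensorProduct.piRightHom k k N F) := by
  obtain ⟨n, π, hπ⟩ := Module.Finite.exists_fin' k N
  intro g
  choose h hh using fun i => rTensor_surjective (F i) hπ (g i)
  obtain ⟨v, hv⟩ := piRightHom_surjective_finFree k F n h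
  refine ⟨rTensor _ π v, funext fun i => ?_⟩
  rw [piRightHom_naturality]
  rw [show TensorProduct.piRightHom k k (Fin n → k) F v i = h i from congrFun hv i]
  exact hh i

lemma piRightHom_apply_eq (M : Type*) [AddCommGroup M] [Module k M]
    (y : M ⊗[k] (∀ i, F i)) (i : I) :
    TensorProduct.piRightHom k k M F y i = LinearMap.lTensor M (LinearMap.proj i) y := by
  induction y using TensorProduct.induction_on with
  | zero => simp
  | tmul m f => rfl
  | add x y hx hy => simp only [map_add, Pi.add_apply, hx, hy]

variable [IsNoetherianRing k]

lemma piRightHom_injective_of_fin (N : Type*) [AddCommGroup N] [Module k N]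
    [Module.Finite k N] : Function.Injective (TensorProduct.piRightHom k k N F) := by
  obtain ⟨n, π, hπ⟩ := Module.Finite.exists_fin' k N
  haveI : Module.Finite k (LinearMap.ker π) :=
    Module.Finite.iff_fg.mpr (IsNoetherian.noetherian _)
  rw [injective_iff_map_eq_zero]
  intro x hx
  obtain ⟨p, rfl⟩ := rTensor_surjective (∀ i, F i) hπ x
  have h1 : ∀ i, rTensor (F i) π (TensorProduct.piRightHom k k _ F p i) = 0 := by
    intro i
    rw [← piRightHom_naturality]
    exact congrFun hx i
  have h2 : ∀ i, ∃ u, rTensor (F i) (LinearMap.ker π).subtype u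
      = TensorProduct.piRightHom k k _ F p i :=
    fun i => (rTensor_exact (F i) (π.exact_subtype_ker_map) hπ _).mp (h1 i)
  choose u hu using h2
  obtain ⟨v, hv⟩ := piRightHom_surjective_of_fin k F (LinearMap.ker π) u
  have hp : rTensor _ (LinearMap.ker π).subtype v = p := by
    apply piRightHom_injective_finFree k F n
    funext i
    rw [piRightHom_naturality,
      show TensorProduct.piRightHom k k _ F v i = u i from congrFun hv i, hu i]
  have hcomp : π ∘ₗ (LinearMap.ker π).subtype = 0 := by
    ext ⟨y, hy⟩; exact hy
  rw [← hp, ← rTensor_comp_apply, hcomp, rTensor_zero, LinearMap.zero_apply]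

theorem piRightHom_inj (M : Type*) [AddCommGroup M] [Module k M]
    [∀ i, Module.Flat k (F i)] :
    Function.Injective (TensorProduct.piRightHom k k M F) := by
  rw [injective_iff_map_eq_zero]
  intro x hx
  obtain ⟨M₀, hfin, hmem⟩ :=
    TensorProduct.exists_finite_submodule_left_of_setFinite {x} (Set.finite_singleton x)
  haveI := hfin
  obtain ⟨x₀, rfl⟩ := hmem rfl
  have h0 : ∀ i, TensorProduct.piRightHom k k M₀ F x₀ i = 0 := by
    intro i
    apply Module.Flat.rTensor_preserves_injective_linearMap (M := F i) M₀.subtype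
      M₀.injective_subtype
    rw [map_zero, ← piRightHom_naturality]
    exact congrFun hx i
  have hx0 : x₀ = 0 := piRightHom_injective_of_fin k F M₀
    (by rw [map_zero]; funext i; exact h0 i)
  rw [hx0, map_zero]

end AuxPi

section BalAux

open LinearMap

variable {R : Type*} [Ring R] {D : Type*} [AddCommGroup D] [Module Rᵐᵒᵖ D]
variable {ι : Type*} (b : Module.Basis ι Rᵐᵒᵖ D)
variable (X : Type*) [AddCommGroup X] [Module R X]

theorem balMk_smul (r : R) (d : D) (x : X) :
    Submodule.Quotient.mk (p := balRels R D X) (((op r) • d) ⊗ₜ[ℤ] x)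
      = Submodule.Quotient.mk (d ⊗ₜ[ℤ] (r • x)) :=
  (Submodule.Quotient.eq _).2 (Submodule.subset_span ⟨r, d, x, rfl⟩)

/-- The additive map `x ↦ ∑ⱼ single j (unop (repr d j) • x)`. -/
noncomputable def phiInner (d : D) : X →+ (ι →₀ X) where
  toFun x := (b.repr d).sum fun j r => Finsupp.single j ((unop r) • x)
  map_zero' := by simp
  map_add' x y := by
    simp only [smul_add, Finsupp.single_add, Finsupp.sum]
    exact Finset.sum_add_distrib

@[simp] lemma phiInner_apply (d : D) (x : X) :
    phiInner b X d x = (b.repr d).sum fun j r => Finsupp.single j ((unop r) • x) := rfl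

noncomputable def phiAdd : D →+ (X →ₗ[ℤ] (ι →₀ X)) where
  toFun d := (phiInner b X d).toIntLinearMap
  map_zero' := by ext x; simp
  map_add' d d' := by
    refine LinearMap.ext fun x => ?_
    show phiInner b X (d + d') x = phiInner b X d x + phiInner b X d' x
    simp only [phiInner_apply, map_add]
    exact Finsupp.sum_add_index' (fun j => by simp) (fun j r r' => by
      rw [MulOpposite.unop_add, add_smul, Finsupp.single_add])

noncomputable def phi : BalTensor R D X →ₗ[ℤ] (ι →₀ X) :=
  Submodule.liftQ _ (TensorProduct.lift (phiAdd b X).toIntLinearMap) (by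
    rw [balRels, Submodule.span_le]
    rintro _ ⟨r, d, x, rfl⟩
    refine LinearMap.mem_ker.2 ((map_sub _ _ _).trans (sub_eq_zero.2 ?_))
    show phiInner b X ((op r) • d) x = phiInner b X d (r • x)
    simp only [phiInner_apply, map_smul]
    rw [Finsupp.sum_smul_index' (fun j => by simp)]
    refine Finsupp.sum_congr fun j _ => ?_
    congr 1
    rw [smul_eq_mul, MulOpposite.unop_mul, MulOpposite.unop_op, mul_smul])

theorem phi_mk_tmul (d : D) (x : X) :
    phi b X (Submodule.Quotient.mk (d ⊗ₜ[ℤ] x))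
      = (b.repr d).sum fun j r => Finsupp.single j ((unop r) • x) := rfl

noncomputable def psi : (ι →₀ X) →ₗ[ℤ] BalTensor R D X :=
  Finsupp.lsum ℤ fun j => (balRels R D X).mkQ ∘ₗ ((TensorProduct.mk ℤ D X) (b j))

theorem psi_phi (z : BalTensor R D X) : psi b X (phi b X z) = z := by
  obtain ⟨w, rfl⟩ := Submodule.Quotient.mk_surjective _ z
  show psi b X (phi b X ((balRels R D X).mkQ w)) = (balRels R D X).mkQ w
  induction w using TensorProduct.induction_on with
  | zero => simp
  | add u v hu hv => simp only [map_add, hu, hv]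
  | tmul d x =>
    rw [show (balRels R D X).mkQ (d ⊗ₜ[ℤ] x) = Submodule.Quotient.mk (d ⊗ₜ[ℤ] x) from rfl,
      phi_mk_tmul, map_finsuppSum]
    have h1 : ∀ j r, psi b X (Finsupp.single j ((unop r : R) • x))
        = ((balRels R D X).mkQ ∘ₗ ((TensorProduct.mk ℤ D X).flip x)) (r • b j) := by
      intro j r
      rw [psi, Finsupp.lsum_single]
      show Submodule.Quotient.mk ((b j) ⊗ₜ[ℤ] ((unop r) • x))
        = Submodule.Quotient.mk ((r • b j) ⊗ₜ[ℤ] x)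
      rw [← balMk_smul X (unop r) (b j) x, MulOpposite.op_unop]
    simp only [h1]
    rw [← map_finsuppSum, ← Finsupp.linearCombination_apply, b.linearCombination_repr]
    rfl

theorem phi_balMap (X' : Type*) [AddCommGroup X'] [Module R X'] (f : X →ₗ[R] X')
    (z : BalTensor R D X) (j : ι) :
    phi b X' (balMap R D f z) j = f (phi b X z j) := by
  classical
  obtain ⟨w, rfl⟩ := Submodule.Quotient.mk_surjective _ z
  show phi b X' (balMap R D f ((balRels R D X).mkQ w)) j = f (phi b X ((balRels R D X).mkQ w) j)
  induction w using TensorProduct.induction_on with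
  | zero => simp
  | add u v hu hv => simp only [map_add, Finsupp.add_apply, hu, hv]
  | tmul d x =>
    have hmap : balMap R D f ((balRels R D X).mkQ (d ⊗ₜ[ℤ] x))
        = Submodule.Quotient.mk (d ⊗ₜ[ℤ] (f x)) := by
      rw [balMap, show (balRels R D X).mkQ (d ⊗ₜ[ℤ] x)
          = Submodule.Quotient.mk (d ⊗ₜ[ℤ] x) from rfl]
      rfl
    rw [hmap, show (balRels R D X).mkQ (d ⊗ₜ[ℤ] x)
        = Submodule.Quotient.mk (d ⊗ₜ[ℤ] x) from rfl, phi_mk_tmul, phi_mk_tmul,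
      Finsupp.sum_apply, Finsupp.sum_apply, Finsupp.sum, Finsupp.sum, map_sum]
    refine Finset.sum_congr rfl fun j' _ => ?_
    rw [Finsupp.single_apply, Finsupp.single_apply]
    split
    · rw [map_smul]
    · rw [map_zero]

end BalAux




/-- Let `k` be a commutative noetherian ring and `A` a `k`-algebra which is flat over `k`.
For a left `A`-module `M`, a family `(Fᵢ)` of rank one free right `A`-modules and a free
`A ⊗[k] Aᵐᵒᵖ`-module `D` (regarded as a right module over the enveloping algebra), the
canonical morphism
`D ⊗_{A ⊗[k] Aᵐᵒᵖ} (M ⊗[k] ∏ᵢ Fᵢ) → ∏ᵢ (D ⊗_{A ⊗[k] Aᵐᵒᵖ} (M ⊗[k] Fᵢ))`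
induced by the projections `∏ᵢ Fᵢ → Fᵢ` is injective. -/
theorem free_tensor_pi_injective (k A : Type u) [CommRing k] [IsNoetherianRing k]
    [Ring A] [Algebra k A] [Module.Flat k A]
    (M : Type u) [AddCommGroup M] [Module k M] [Module A M] [IsScalarTower k A M]
    (I : Type u) (F : I → Type u) [∀ i, AddCommGroup (F i)] [∀ i, Module k (F i)]
    [∀ i, Module Aᵐᵒᵖ (F i)] [∀ i, IsScalarTower k Aᵐᵒᵖ (F i)]
    (hF : ∀ i, Nonempty (F i ≃ₗ[Aᵐᵒᵖ] A))
    (D : Type u) [AddCommGroup D] [Module (A ⊗[k] Aᵐᵒᵖ)ᵐᵒᵖ D]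
    [Module.Free (A ⊗[k] Aᵐᵒᵖ)ᵐᵒᵖ D] :
    letI := bimoduleTensorModule k A M (∀ j, F j)
    letI := fun i => bimoduleTensorModule k A M (F i)
    letI : ∀ i, AddCommGroup (BalTensor (A ⊗[k] Aᵐᵒᵖ) D (M ⊗[k] F i)) := fun i => inferInstance
    Function.Injective
      (LinearMap.pi fun i =>
        balMap (A ⊗[k] Aᵐᵒᵖ) D (bimodPiProj k A M F i) :
        BalTensor (A ⊗[k] Aᵐᵒᵖ) D (M ⊗[k] (∀ j, F j)) →ₗ[ℤ]
          ∀ i, BalTensor (A ⊗[k] Aᵐᵒᵖ) D (M ⊗[k] F i)) := by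
  letI := bimoduleTensorModule k A M (∀ j, F j)
  letI := fun i => bimoduleTensorModule k A M (F i)
  letI : ∀ i, AddCommGroup (BalTensor (A ⊗[k] Aᵐᵒᵖ) D (M ⊗[k] F i)) := fun i => inferInstance
  haveI hTower : IsScalarTower k Aᵐᵒᵖ A := ⟨fun c a b => by
    induction a using MulOpposite.rec' with
    | _ a =>
      rw [← MulOpposite.op_smul, op_smul_eq_mul, op_smul_eq_mul, mul_smul_comm]⟩
  haveI hFlat : ∀ i, Module.Flat k (F i) := fun i => by
    obtain ⟨e⟩ := hF i
    exact Module.Flat.of_linearEquiv (e.restrictScalars k)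
  set R := A ⊗[k] Aᵐᵒᵖ with hR
  let b := Module.Free.chooseBasis Rᵐᵒᵖ D
  rw [injective_iff_map_eq_zero]
  intro z hz
  rw [← psi_phi b (M ⊗[k] (∀ j, F j)) z]
  suffices h : phi b (M ⊗[k] (∀ j, F j)) z = 0 by rw [h, map_zero]
  ext j
  have hcomp : ∀ i, LinearMap.lTensor M (LinearMap.proj i : (∀ l, F l) →ₗ[k] F i)
      ((phi b (M ⊗[k] (∀ j, F j)) z) j) = 0 := by
    intro i
    have hz_i : balMap R D (bimodPiProj k A M F i) z = 0 := by
      have := congrFun hz i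
      rwa [LinearMap.pi_apply] at this
    have hnat := phi_balMap b (M ⊗[k] (∀ j, F j)) (M ⊗[k] F i) (bimodPiProj k A M F i) z j
    rw [hz_i, map_zero, Finsupp.zero_apply] at hnat
    exact hnat.symm
  have hpr : TensorProduct.piRightHom k k M F ((phi b (M ⊗[k] (∀ j, F j)) z) j) = 0 := by
    funext i
    rw [piRightHom_apply_eq]
    exact hcomp i
  have := piRightHom_inj k F M
    (show TensorProduct.piRightHom k k M F ((phi b (M ⊗[k] (∀ j, F j)) z) j)
      = TensorProduct.piRightHom k k M F 0 by rw [hpr, map_zero])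
  simpa using this

end
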